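/- Let J, N ∈ ℕ with N ≥ 2, τ > 0, and for n = 0, …, N let M^n be real symmetric positive definite J×J matrices, S^n real symmetric positive semidefinite J×J matrices, and b^n : ℝ^J × ℝ^J → ℝ bilinear forms. Assume: (i) there is μ ≥ 0 such that for all n < N and all x, y ∈ ℝ^J, |(M^{n+1} − M^n) x·y| ≤ μ τ (M^n x·x)^{1/2} (M^n y·y)^{1/2}; (ii) there is c_b ≥ 0 such that for all n and all x, |b^n(x,x)| ≤ (1/4)(S^n x·x) + c_b (M^n x·x). Let θ^0, …, θ^N ∈ ℝ^J and δ_2, …, δ_N ≥ 0 and c_R ≥ 0 be such that for n = 1, …, N−1 and all φ ∈ ℝ^J, (1/τ) ( (3/2)(M^{n+1} θ^{n+1})·φ − 2(M^n θ^n)·φ + (1/2)(M^{n−1} θ^{n−1})·φ ) + (S^{n+1} θ^{n+1})·φ + b^{n+1}(θ^{n+1}, φ) = R^{n+1}(φ), where R^{n+1} : ℝ^J → ℝ is linear and satisfies |R^{n+1}(θ^{n+1})| ≤ (1/4)(S^{n+1} θ^{n+1}·θ^{n+1}) + c_R (M^{n+1} θ^{n+1}·θ^{n+1}) + δ_{n+1}.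 Then there exist τ₀ > 0 and C ≥ 0, depending only on μ, c_b, c_R and the product Nτ, such that whenever τ ≤ τ₀, for every n with 2 ≤ n ≤ N: M^n θ^n·θ^n + τ Σ_{i=2}^{n} S^i θ^i·θ^i ≤ C ( M^0 θ^0·θ^0 + M^1 θ^1·θ^1 + τ Σ_{i=2}^{n} δ_i ). -/

import Mathlib

open Matrix

section BDF2Aux
variable {J : ℕ}

lemma symm_swap (A : Matrix (Fin J) (Fin J) ℝ) (hA : A.IsHermitian) (x y : Fin J → ℝ) :
    A.mulVec x ⬝ᵥ y = A.mulVec y ⬝ᵥ x := by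
  rw [dotProduct_comm, dotProduct_mulVec, ← mulVec_transpose]
  congr 1
  rw [← conjTranspose_eq_transpose_of_trivial, hA.eq]

lemma psd_nonneg (A : Matrix (Fin J) (Fin J) ℝ) (hA : A.PosSemidef) (x : Fin J → ℝ) :
    0 ≤ A.mulVec x ⬝ᵥ x := by
  have := hA.dotProduct_mulVec_nonneg x
  simpa [dotProduct_comm] using this

lemma psd_cs (A : Matrix (Fin J) (Fin J) ℝ) (hA : A.PosSemidef) (x y : Fin J → ℝ) :
    |A.mulVec x ⬝ᵥ y| ≤ Real.sqrt (A.mulVec x ⬝ᵥ x) * Real.sqrt (A.mulVec y ⬝ᵥ y) := by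
  have hq : ∀ t : ℝ, 0 ≤ (A.mulVec y ⬝ᵥ y) * (t * t) + (2 * (A.mulVec x ⬝ᵥ y)) * t
      + (A.mulVec x ⬝ᵥ x) := by
    intro t
    have h0 := psd_nonneg A hA (x + t • y)
    have hsw := symm_swap A hA.1 x y
    simp only [mulVec_add, mulVec_smul, add_dotProduct, smul_dotProduct, dotProduct_add,
      dotProduct_smul, smul_eq_mul] at h0
    rw [hsw] at h0
    ring_nf at h0 ⊢
    rw [hsw]
    linarith
  have hd := discrim_le_zero hq
  unfold discrim at hd
  have h1 : (A.mulVec x ⬝ᵥ y)^2 ≤ (A.mulVec x ⬝ᵥ x) * (A.mulVec y ⬝ᵥ y) := by nlinarith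
  have hxx := psd_nonneg A hA x
  have hyy := psd_nonneg A hA y
  calc |A.mulVec x ⬝ᵥ y| = Real.sqrt ((A.mulVec x ⬝ᵥ y)^2) := (Real.sqrt_sq_eq_abs _).symm
    _ ≤ Real.sqrt ((A.mulVec x ⬝ᵥ x) * (A.mulVec y ⬝ᵥ y)) := Real.sqrt_le_sqrt h1
    _ = _ := Real.sqrt_mul hxx _

lemma sqrt_mul_le (x y : ℝ) (hx : 0 ≤ x) (hy : 0 ≤ y) :
    Real.sqrt x * Real.sqrt y ≤ (x + y) / 2 := by
  nlinarith [sq_nonneg (Real.sqrt x - Real.sqrt y), Real.sq_sqrt hx, Real.sq_sqrt hy]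

lemma psd_sub_le (A : Matrix (Fin J) (Fin J) ℝ) (hA : A.PosSemidef) (x y : Fin J → ℝ) :
    A.mulVec (x - y) ⬝ᵥ (x - y) ≤ 2 * (A.mulVec x ⬝ᵥ x) + 2 * (A.mulVec y ⬝ᵥ y) := by
  have hcs := psd_cs A hA x y
  have hsw := symm_swap A hA.1 x y
  have hml := sqrt_mul_le _ _ (psd_nonneg A hA x) (psd_nonneg A hA y)
  have habs : A.mulVec x ⬝ᵥ y ≥ -( (A.mulVec x ⬝ᵥ x + A.mulVec y ⬝ᵥ y)/2 ) := by
    have := neg_abs_le (A.mulVec x ⬝ᵥ y)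
    linarith
  simp only [mulVec_sub, sub_dotProduct, dotProduct_sub]
  linarith

lemma psd_smul_two (A : Matrix (Fin J) (Fin J) ℝ) (x : Fin J → ℝ) :
    A.mulVec ((2:ℝ) • x) ⬝ᵥ ((2:ℝ) • x) = 4 * (A.mulVec x ⬝ᵥ x) := by
  simp only [mulVec_smul, smul_dotProduct, dotProduct_smul, smul_eq_mul]; ring

lemma key_identity (A : Matrix (Fin J) (Fin J) ℝ) (hA : A.IsHermitian) (a b c : Fin J → ℝ) :
    (3/2) * (A.mulVec a ⬝ᵥ a) - 2 * (A.mulVec b ⬝ᵥ a) + (1/2) * (A.mulVec c ⬝ᵥ a)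
      = (1/4) * ((A.mulVec a ⬝ᵥ a) + (A.mulVec ((2:ℝ)•a - b) ⬝ᵥ ((2:ℝ)•a - b)))
        - (1/4) * ((A.mulVec b ⬝ᵥ b) + (A.mulVec ((2:ℝ)•b - c) ⬝ᵥ ((2:ℝ)•b - c)))
        + (1/4) * (A.mulVec (a - (2:ℝ)•b + c) ⬝ᵥ (a - (2:ℝ)•b + c)) := by
  simp only [mulVec_add, mulVec_sub, mulVec_smul, add_dotProduct, sub_dotProduct,
    smul_dotProduct, dotProduct_add, dotProduct_sub, dotProduct_smul, smul_eq_mul]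
  rw [symm_swap A hA b a, symm_swap A hA c a, symm_swap A hA c b]
  ring

/-- final scalar nonlinear step -/
lemma step_scalar (W μ τ s δ' P G : ℝ) (hW : 0 ≤ W) (hμ : 0 ≤ μ) (hτ : 0 < τ) (hτ1 : τ ≤ 1)
    (hWτ : 4*W*τ ≤ 1/2) (hs : 0 ≤ s) (hδ : 0 ≤ δ') (hP : 0 ≤ P) (hG : 0 ≤ G)
    (h : (1 - 4*W*τ)*P + (τ/2)*s ≤ (1 + 29*(μ*τ))*G + τ*δ') :
    P + (τ/2)*s ≤ (1 + (2*(4*W) + 29*μ + 58*(4*W)*μ)*τ)*G + 2*τ*δ' := by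
  have h8 : (0:ℝ) ≤ 1 + 8*W*τ := by nlinarith
  have h7 := mul_le_mul_of_nonneg_left h h8
  have f1 : 0 ≤ 4*W*τ*(1-8*W*τ)*P := by
    apply mul_nonneg
    apply mul_nonneg
    · positivity
    · linarith
    · exact hP
  have f2 : 0 ≤ W*τ*τ*s := by positivity
  have f3 : 0 ≤ 232*W*μ*(τ-τ^2)*G := by
    apply mul_nonneg
    apply mul_nonneg
    · positivity
    · nlinarith
    · exact hG
  have f4 : 0 ≤ (1-8*W*τ)*(τ*δ') := by
    apply mul_nonneg
    · linarith
    · positivity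
  nlinarith [h7, f1, f2, f3, f4]

set_option maxHeartbeats 1000000 in
lemma bdf2_step {J : ℕ} (μ c_b c_R τ δ' : ℝ) (hμ : 0 ≤ μ) (hcb : 0 ≤ c_b) (hcR : 0 ≤ c_R)
    (hτ : 0 < τ) (hτ1 : τ ≤ 1) (hμτ : μ * τ ≤ 1/2)
    (hKτ : 4*(c_b + c_R + 4*μ) * τ ≤ 1/2) (hδ : 0 ≤ δ')
    (M0 M1 M2 S2 : Matrix (Fin J) (Fin J) ℝ)
    (hM0 : M0.PosSemidef) (hM1 : M1.PosSemidef) (hM2 : M2.PosSemidef) (hS2 : S2.PosSemidef)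
    (a b c : Fin J → ℝ)
    (hlip1 : ∀ x y, |(M1 - M0).mulVec x ⬝ᵥ y|
      ≤ μ * τ * Real.sqrt (M0.mulVec x ⬝ᵥ x) * Real.sqrt (M0.mulVec y ⬝ᵥ y))
    (hlip2 : ∀ x y, |(M2 - M1).mulVec x ⬝ᵥ y|
      ≤ μ * τ * Real.sqrt (M1.mulVec x ⬝ᵥ x) * Real.sqrt (M1.mulVec y ⬝ᵥ y))
    (B Ra : ℝ)
    (hB : |B| ≤ (1/4) * (S2.mulVec a ⬝ᵥ a) + c_b * (M2.mulVec a ⬝ᵥ a))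
    (hRa : |Ra| ≤ (1/4) * (S2.mulVec a ⬝ᵥ a) + c_R * (M2.mulVec a ⬝ᵥ a) + δ')
    (hscheme : (3/2) * (M2.mulVec a ⬝ᵥ a) - 2 * (M1.mulVec b ⬝ᵥ a)
        + (1/2) * (M0.mulVec c ⬝ᵥ a) + τ * (S2.mulVec a ⬝ᵥ a) + τ * B = τ * Ra) :
    (1/4) * (M2.mulVec a ⬝ᵥ a + M2.mulVec ((2:ℝ)•a - b) ⬝ᵥ ((2:ℝ)•a - b))
        + (τ/2) * (S2.mulVec a ⬝ᵥ a)
      ≤ (1 + (2*(4*(c_b + c_R + 4*μ)) + 29*μ + 58*(4*(c_b + c_R + 4*μ))*μ) * τ)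
          * ((1/4) * (M1.mulVec b ⬝ᵥ b + M1.mulVec ((2:ℝ)•b - c) ⬝ᵥ ((2:ℝ)•b - c)))
        + 2 * τ * δ' := by
  have hμτ0 : 0 ≤ μ * τ := by positivity
  -- raw structural facts (before abstraction)
  have hid := key_identity M2 hM2.1 a b c
  have hsub2b : (M2 - M1).mulVec b ⬝ᵥ a = M2.mulVec b ⬝ᵥ a - M1.mulVec b ⬝ᵥ a := by
    rw [sub_mulVec, sub_dotProduct]
  have hsub2c : (M2 - M1).mulVec c ⬝ᵥ a = M2.mulVec c ⬝ᵥ a - M1.mulVec c ⬝ᵥ a := by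
    rw [sub_mulVec, sub_dotProduct]
  have hsub1c : (M1 - M0).mulVec c ⬝ᵥ a = M1.mulVec c ⬝ᵥ a - M0.mulVec c ⬝ᵥ a := by
    rw [sub_mulVec, sub_dotProduct]
  -- quadratic Lipschitz bounds
  have hlipq1 : ∀ x : Fin J → ℝ,
      |M1.mulVec x ⬝ᵥ x - M0.mulVec x ⬝ᵥ x| ≤ μ * τ * (M0.mulVec x ⬝ᵥ x) := by
    intro x
    have h := hlip1 x x
    rw [sub_mulVec, sub_dotProduct] at h
    calc |M1.mulVec x ⬝ᵥ x - M0.mulVec x ⬝ᵥ x| ≤ _ := h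
      _ = μ * τ * (M0.mulVec x ⬝ᵥ x) := by
          rw [mul_assoc, Real.mul_self_sqrt (psd_nonneg _ hM0 x)]
  have hlipq2 : ∀ x : Fin J → ℝ,
      |M2.mulVec x ⬝ᵥ x - M1.mulVec x ⬝ᵥ x| ≤ μ * τ * (M1.mulVec x ⬝ᵥ x) := by
    intro x
    have h := hlip2 x x
    rw [sub_mulVec, sub_dotProduct] at h
    calc |M2.mulVec x ⬝ᵥ x - M1.mulVec x ⬝ᵥ x| ≤ _ := h
      _ = μ * τ * (M1.mulVec x ⬝ᵥ x) := by
          rw [mul_assoc, Real.mul_self_sqrt (psd_nonneg _ hM1 x)]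
  -- sqrt-free difference bounds
  have hD2b : |(M2 - M1).mulVec b ⬝ᵥ a|
      ≤ μ * τ * ((M1.mulVec b ⬝ᵥ b + M1.mulVec a ⬝ᵥ a) / 2) := by
    refine le_trans (hlip2 b a) ?_
    have h := sqrt_mul_le _ _ (psd_nonneg _ hM1 b) (psd_nonneg _ hM1 a)
    calc μ * τ * Real.sqrt (M1.mulVec b ⬝ᵥ b) * Real.sqrt (M1.mulVec a ⬝ᵥ a)
        = μ * τ * (Real.sqrt (M1.mulVec b ⬝ᵥ b) * Real.sqrt (M1.mulVec a ⬝ᵥ a)) := by ring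
      _ ≤ _ := mul_le_mul_of_nonneg_left h hμτ0
  have hD2c : |(M2 - M1).mulVec c ⬝ᵥ a|
      ≤ μ * τ * ((M1.mulVec c ⬝ᵥ c + M1.mulVec a ⬝ᵥ a) / 2) := by
    refine le_trans (hlip2 c a) ?_
    have h := sqrt_mul_le _ _ (psd_nonneg _ hM1 c) (psd_nonneg _ hM1 a)
    calc μ * τ * Real.sqrt (M1.mulVec c ⬝ᵥ c) * Real.sqrt (M1.mulVec a ⬝ᵥ a)
        = μ * τ * (Real.sqrt (M1.mulVec c ⬝ᵥ c) * Real.sqrt (M1.mulVec a ⬝ᵥ a)) := by ring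
      _ ≤ _ := mul_le_mul_of_nonneg_left h hμτ0
  have hD1c : |(M1 - M0).mulVec c ⬝ᵥ a|
      ≤ μ * τ * ((M0.mulVec c ⬝ᵥ c + M0.mulVec a ⬝ᵥ a) / 2) := by
    refine le_trans (hlip1 c a) ?_
    have h := sqrt_mul_le _ _ (psd_nonneg _ hM0 c) (psd_nonneg _ hM0 a)
    calc μ * τ * Real.sqrt (M0.mulVec c ⬝ᵥ c) * Real.sqrt (M0.mulVec a ⬝ᵥ a)
        = μ * τ * (Real.sqrt (M0.mulVec c ⬝ᵥ c) * Real.sqrt (M0.mulVec a ⬝ᵥ a)) := by ring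
      _ ≤ _ := mul_le_mul_of_nonneg_left h hμτ0
  -- decomposition of θ^{n-1}
  have hcdecomp : (2:ℝ)•b - ((2:ℝ)•b - c) = c := by abel
  have hc1 : M1.mulVec c ⬝ᵥ c
      ≤ 8 * (M1.mulVec b ⬝ᵥ b) + 2 * (M1.mulVec ((2:ℝ)•b - c) ⬝ᵥ ((2:ℝ)•b - c)) := by
    have h := psd_sub_le M1 hM1 ((2:ℝ)•b) ((2:ℝ)•b - c)
    rw [hcdecomp, psd_smul_two M1 b] at h
    linarith
  -- now abstract all quadratic quantities
  generalize hX1 : (M2 - M1).mulVec b ⬝ᵥ a = X1 at *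
  generalize hX2 : (M2 - M1).mulVec c ⬝ᵥ a = X2 at *
  generalize hX3 : (M1 - M0).mulVec c ⬝ᵥ a = X3 at *
  have h2a := psd_nonneg _ hM2 a
  have h1a := psd_nonneg _ hM1 a
  have h0a := psd_nonneg _ hM0 a
  have h1b := psd_nonneg _ hM1 b
  have h1c := psd_nonneg _ hM1 c
  have h0c := psd_nonneg _ hM0 c
  have h1d := psd_nonneg _ hM1 ((2:ℝ)•b - c)
  have h2e := psd_nonneg _ hM2 ((2:ℝ)•a - b)
  have hjj0 := psd_nonneg _ hM2 (a - (2:ℝ)•b + c)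
  have hss := psd_nonneg _ hS2 a
  have l2b := abs_le.mp (hlipq2 b)
  have l2d := abs_le.mp (hlipq2 ((2:ℝ)•b - c))
  have l2a := abs_le.mp (hlipq2 a)
  have l1a := abs_le.mp (hlipq1 a)
  have l1c := abs_le.mp (hlipq1 c)
  generalize hq2a : M2.mulVec a ⬝ᵥ a = q2a at *
  generalize hq1a : M1.mulVec a ⬝ᵥ a = q1a at *
  generalize hq0a : M0.mulVec a ⬝ᵥ a = q0a at *
  generalize hq1b : M1.mulVec b ⬝ᵥ b = q1b at *
  generalize hq2b : M2.mulVec b ⬝ᵥ b = q2b at *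
  generalize hq1c : M1.mulVec c ⬝ᵥ c = q1c at *
  generalize hq0c : M0.mulVec c ⬝ᵥ c = q0c at *
  generalize hq1d : M1.mulVec ((2:ℝ)•b - c) ⬝ᵥ ((2:ℝ)•b - c) = q1d at *
  generalize hq2d : M2.mulVec ((2:ℝ)•b - c) ⬝ᵥ ((2:ℝ)•b - c) = q2d at *
  generalize hq2e : M2.mulVec ((2:ℝ)•a - b) ⬝ᵥ ((2:ℝ)•a - b) = q2e at *
  generalize hq2j : M2.mulVec (a - (2:ℝ)•b + c) ⬝ᵥ (a - (2:ℝ)•b + c) = q2j at *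
  generalize hsv : S2.mulVec a ⬝ᵥ a = s at *
  generalize hb2a : M2.mulVec b ⬝ᵥ a = r2b at *
  generalize hc2a : M2.mulVec c ⬝ᵥ a = r2c at *
  generalize hb1a : M1.mulVec b ⬝ᵥ a = r1b at *
  generalize hc1a : M1.mulVec c ⬝ᵥ a = r1c at *
  generalize hc0a : M0.mulVec c ⬝ᵥ a = r0c at *
  -- norm equivalences
  have e0a : q0a ≤ 2 * q1a := by
    linarith only [l1a.1, l1a.2, mul_nonneg (by linarith only [hμτ] : (0:ℝ) ≤ 1/2 - μ*τ) h0a]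
  have e1a : q1a ≤ 2 * q2a := by
    linarith only [l2a.1, l2a.2, mul_nonneg (by linarith only [hμτ] : (0:ℝ) ≤ 1/2 - μ*τ) h1a]
  have e0c : q0c ≤ 2 * q1c := by
    linarith only [l1c.1, l1c.2, mul_nonneg (by linarith only [hμτ] : (0:ℝ) ≤ 1/2 - μ*τ) h0c]
  -- the main identity-based equality
  have hmain : (1/4)*(q2a + q2e) + (1/4)*q2j + τ * s
      = (1/4)*(q2b + q2d) - 2*X1 + (1/2)*X2 + (1/2)*X3 - τ*B + τ*Ra := by
    linarith only [hid, hscheme, hsub2b, hsub2c, hsub1c]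
  -- product bounds
  have pma : μ*τ*((q1b + q1a)/2) ≤ μ*τ*((q1b + 2*q2a)/2) :=
    mul_le_mul_of_nonneg_left (by linarith) hμτ0
  have pmb : μ*τ*((q1c + q1a)/2) ≤ μ*τ*((8*q1b + 2*q1d + 2*q2a)/2) :=
    mul_le_mul_of_nonneg_left (by linarith) hμτ0
  have pmc : μ*τ*((q0c + q0a)/2) ≤ μ*τ*((16*q1b + 4*q1d + 4*q2a)/2) :=
    mul_le_mul_of_nonneg_left (by linarith) hμτ0
  have pB1 : τ * B ≤ τ * |B| := mul_le_mul_of_nonneg_left (le_abs_self B) hτ.le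
  have pB2 : τ * (-|B|) ≤ τ * B := mul_le_mul_of_nonneg_left (neg_abs_le B) hτ.le
  have pB3 : τ * |B| ≤ τ * ((1/4)*s + c_b*q2a) := mul_le_mul_of_nonneg_left hB hτ.le
  have pR1 : τ * Ra ≤ τ * |Ra| := mul_le_mul_of_nonneg_left (le_abs_self Ra) hτ.le
  have pR3 : τ * |Ra| ≤ τ * ((1/4)*s + c_R*q2a + δ') := mul_le_mul_of_nonneg_left hRa hτ.le
  have aX1 : -|X1| ≤ X1 := neg_abs_le X1
  have aX2 : X2 ≤ |X2| := le_abs_self X2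
  have aX3 : X3 ≤ |X3| := le_abs_self X3
  -- the central estimate
  have hest : (1/4)*(q2a + q2e) + τ * s
      ≤ (1 + 29*(μ*τ)) * ((1/4)*(q1b + q1d)) + (c_b + c_R + 4*μ)*τ*q2a + (τ/2)*s + τ*δ' := by
    have smτ : 0 ≤ μ*τ*q2a := by positivity
    have smτ2 : 0 ≤ μ*τ*q1d := by positivity
    linarith only [hmain, hjj0, hD2b, hD2c, hD1c, pma, pmb, pmc, pB1, pB2, pB3, pR1, pR3,
      aX1, aX2, aX3, l2b.2, l2d.2, smτ, smτ2]
  -- conclude via the scalar lemma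
  have hP : 0 ≤ (1/4)*(q2a + q2e) := by positivity
  have hG : 0 ≤ (1/4)*(q1b + q1d) := by positivity
  have hfin := step_scalar (c_b + c_R + 4*μ) μ τ s δ' ((1/4)*(q2a + q2e)) ((1/4)*(q1b + q1d))
    (by positivity) hμ hτ hτ1 (by linarith) hss hδ hP hG
    (by linarith only [hest, mul_nonneg (mul_nonneg (by positivity : (0:ℝ) ≤ c_b + c_R + 4*μ) hτ.le) h2e,
        mul_nonneg hτ.le hss])
  linarith only [hfin]

end BDF2Aux

lemma bdf2_gronwall (A τ : ℝ) (hA : 0 ≤ A) (hτ : 0 ≤ τ) (g s d : ℕ → ℝ) (N : ℕ)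
    (hg1 : 0 ≤ g 1) (hs : ∀ i, 2 ≤ i → i ≤ N → 0 ≤ s i)
    (hd : ∀ i, 2 ≤ i → i ≤ N → 0 ≤ d i)
    (hstep : ∀ n, 1 ≤ n → n < N → g (n+1) + s (n+1) ≤ (1 + A*τ) * g n + d (n+1)) :
    ∀ n, 1 ≤ n → n ≤ N →
      g n + ∑ i ∈ Finset.Icc 2 n, s i
        ≤ (1 + A*τ)^(n-1) * (g 1 + ∑ i ∈ Finset.Icc 2 n, d i) := by
  have hone : (1:ℝ) ≤ 1 + A*τ := by nlinarith
  intro n hn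
  induction n, hn using Nat.le_induction with
  | base => intro _; simp
  | succ n hn ih =>
    intro hN
    have hnN : n < N := hN
    have ihn := ih (le_of_lt hnN)
    have hsum : ∀ m, 2 ≤ m + 1 → (∑ i ∈ Finset.Icc 2 (m+1), s i) = (∑ i ∈ Finset.Icc 2 m, s i) + s (m+1) := by
      intro m hm
      rw [Finset.sum_Icc_succ_top (by omega : 2 ≤ m + 1)]
    have hsums : (∑ i ∈ Finset.Icc 2 (n+1), s i) = (∑ i ∈ Finset.Icc 2 n, s i) + s (n+1) :=
      hsum n (by omega)
    have hsumd : (∑ i ∈ Finset.Icc 2 (n+1), d i) = (∑ i ∈ Finset.Icc 2 n, d i) + d (n+1) := by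
      rw [Finset.sum_Icc_succ_top (by omega : 2 ≤ n + 1)]
    have hssum_nonneg : 0 ≤ ∑ i ∈ Finset.Icc 2 n, s i :=
      Finset.sum_nonneg fun i hi => hs i (Finset.mem_Icc.mp hi).1 (le_trans (Finset.mem_Icc.mp hi).2 (le_of_lt hnN))
    have hdsum_nonneg : 0 ≤ ∑ i ∈ Finset.Icc 2 n, d i :=
      Finset.sum_nonneg fun i hi => hd i (Finset.mem_Icc.mp hi).1 (le_trans (Finset.mem_Icc.mp hi).2 (le_of_lt hnN))
    have hdn1 : 0 ≤ d (n+1) := hd (n+1) (by omega) hN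
    have hpow1 : (1:ℝ) ≤ (1 + A*τ)^n := one_le_pow₀ hone
    have hpow_nonneg : (0:ℝ) ≤ (1 + A*τ)^(n-1) := by positivity
    have hstepn := hstep n hn hnN
    have key : g (n+1) + ((∑ i ∈ Finset.Icc 2 n, s i) + s (n+1))
        ≤ (1 + A*τ) * ((1 + A*τ)^(n-1) * (g 1 + ∑ i ∈ Finset.Icc 2 n, d i)) + d (n+1) := by
      have h2 : g (n+1) + ((∑ i ∈ Finset.Icc 2 n, s i) + s (n+1))
          ≤ (1 + A*τ) * (g n + ∑ i ∈ Finset.Icc 2 n, s i) + d (n+1) := by nlinarith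
      have h3 : (1 + A*τ) * (g n + ∑ i ∈ Finset.Icc 2 n, s i)
          ≤ (1 + A*τ) * ((1 + A*τ)^(n-1) * (g 1 + ∑ i ∈ Finset.Icc 2 n, d i)) :=
        mul_le_mul_of_nonneg_left ihn (by linarith)
      linarith
    have hpow_eq : (1 + A*τ) * (1 + A*τ)^(n-1) = (1 + A*τ)^n := by
      rw [← pow_succ']
      congr 1
      omega
    have hfin : (1 + A*τ)^n * (g 1 + ∑ i ∈ Finset.Icc 2 n, d i) + d (n+1)
        ≤ (1 + A*τ)^n * (g 1 + ∑ i ∈ Finset.Icc 2 (n+1), d i) := by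
      rw [hsumd]
      have : d (n+1) ≤ (1 + A*τ)^n * d (n+1) := le_mul_of_one_le_left hdn1 hpow1
      rw [← add_assoc, mul_add]
      linarith
    rw [hsums]
    calc g (n+1) + ((∑ i ∈ Finset.Icc 2 n, s i) + s (n+1))
        ≤ (1 + A*τ) * ((1 + A*τ)^(n-1) * (g 1 + ∑ i ∈ Finset.Icc 2 n, d i)) + d (n+1) := key
      _ = (1 + A*τ)^n * (g 1 + ∑ i ∈ Finset.Icc 2 n, d i) + d (n+1) := by rw [← mul_assoc, hpow_eq]
      _ ≤ (1 + A*τ)^n * (g 1 + ∑ i ∈ Finset.Icc 2 (n+1), d i) := hfin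
      _ = (1 + A*τ)^((n+1)-1) * (g 1 + ∑ i ∈ Finset.Icc 2 (n+1), d i) := by norm_num


/-- Perturbed BDF2 stability estimate (matrix–vector form) used in the final
step of the error analysis of the fully discrete BDF2 ALE-ESFEM method: there
exist `τ₀ > 0` and `C ≥ 0` depending only on `μ, c_b, c_R` and `T = Nτ` such
that, whenever `τ ≤ τ₀`, any sequence `θ` solving the perturbed BDF2 scheme
with linear residuals `R^{n+1}` bounded by
`|R^{n+1}(θ^{n+1})| ≤ (1/4) S^{n+1}θ^{n+1}·θ^{n+1} + c_R M^{n+1}θ^{n+1}·θ^{n+1} + δ_{n+1}`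
satisfies `Mⁿθⁿ·θⁿ + τ ∑_{i=2}^n Sⁱθⁱ·θⁱ
  ≤ C (M⁰θ⁰·θ⁰ + M¹θ¹·θ¹ + τ ∑_{i=2}^n δᵢ)` for all `2 ≤ n ≤ N`. -/
theorem bdf2_perturbed_stability
    (μ c_b c_R T : ℝ) (hμ : 0 ≤ μ) (hcb : 0 ≤ c_b) (hcR : 0 ≤ c_R) (hT : 0 < T) :
    ∃ τ₀ : ℝ, 0 < τ₀ ∧ ∃ C : ℝ, 0 ≤ C ∧
      ∀ (J N : ℕ), 2 ≤ N → ∀ τ : ℝ, 0 < τ → τ ≤ τ₀ → (N : ℝ) * τ = T →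
      ∀ (M S : ℕ → Matrix (Fin J) (Fin J) ℝ)
        (b : ℕ → (Fin J → ℝ) →ₗ[ℝ] (Fin J → ℝ) →ₗ[ℝ] ℝ),
        (∀ n ≤ N, (M n).PosDef) →
        (∀ n ≤ N, (S n).PosSemidef) →
        -- (i) Lipschitz-in-time mass matrices
        (∀ n < N, ∀ x y : Fin J → ℝ,
          |(M (n + 1) - M n).mulVec x ⬝ᵥ y|
            ≤ μ * τ * Real.sqrt ((M n).mulVec x ⬝ᵥ x)
                * Real.sqrt ((M n).mulVec y ⬝ᵥ y)) →
        -- (ii) bound on the advection forms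
        (∀ n ≤ N, ∀ x : Fin J → ℝ,
          |b n x x| ≤ (1 / 4) * ((S n).mulVec x ⬝ᵥ x)
            + c_b * ((M n).mulVec x ⬝ᵥ x)) →
        ∀ (θ : ℕ → Fin J → ℝ) (δ : ℕ → ℝ)
          (R : ℕ → (Fin J → ℝ) →ₗ[ℝ] ℝ),
          (∀ i, 2 ≤ i → i ≤ N → 0 ≤ δ i) →
          (∀ n, 1 ≤ n → n < N → ∀ φ : Fin J → ℝ,
            (1 / τ) * ((3 / 2) * ((M (n + 1)).mulVec (θ (n + 1)) ⬝ᵥ φ)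
                  - 2 * ((M n).mulVec (θ n) ⬝ᵥ φ)
                  + (1 / 2) * ((M (n - 1)).mulVec (θ (n - 1)) ⬝ᵥ φ))
                + (S (n + 1)).mulVec (θ (n + 1)) ⬝ᵥ φ
                + b (n + 1) (θ (n + 1)) φ = R (n + 1) φ) →
          (∀ n, 1 ≤ n → n < N →
            |R (n + 1) (θ (n + 1))|
              ≤ (1 / 4) * ((S (n + 1)).mulVec (θ (n + 1)) ⬝ᵥ θ (n + 1))
                + c_R * ((M (n + 1)).mulVec (θ (n + 1)) ⬝ᵥ θ (n + 1))
                + δ (n + 1)) →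
          ∀ n, 2 ≤ n → n ≤ N →
            (M n).mulVec (θ n) ⬝ᵥ θ n
                + τ * ∑ i ∈ Finset.Icc 2 n, (S i).mulVec (θ i) ⬝ᵥ θ i
              ≤ C * ((M 0).mulVec (θ 0) ⬝ᵥ θ 0 + (M 1).mulVec (θ 1) ⬝ᵥ θ 1
                  + τ * ∑ i ∈ Finset.Icc 2 n, δ i) := by
  have hW0 : (0:ℝ) ≤ c_b + c_R + 4*μ := by linarith
  have hAbar0 : (0:ℝ) ≤ 2*(4*(c_b + c_R + 4*μ)) + 29*μ + 58*(4*(c_b + c_R + 4*μ))*μ := by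
    have := mul_nonneg hW0 hμ
    nlinarith
  refine ⟨1/(2*(4*(c_b + c_R + 4*μ) + μ + 1)), one_div_pos.mpr (by linarith), ?_⟩
  refine ⟨12 * Real.exp ((2*(4*(c_b + c_R + 4*μ)) + 29*μ + 58*(4*(c_b + c_R + 4*μ))*μ) * T),
    by positivity, ?_⟩
  intro J N hN τ hτ hττ0 hNτ M S b hMpd hSpsd hlip hbb θ δ R hδ hEq hR
  -- basic smallness facts for τ
  have hLτ : (4*(c_b + c_R + 4*μ) + μ + 1) * τ ≤ 1/2 := by
    have h1 : (4*(c_b + c_R + 4*μ) + μ + 1) * τ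
        ≤ (4*(c_b + c_R + 4*μ) + μ + 1) * (1/(2*(4*(c_b + c_R + 4*μ) + μ + 1))) :=
      mul_le_mul_of_nonneg_left hττ0 (by linarith)
    have h2 : (4*(c_b + c_R + 4*μ) + μ + 1) * (1/(2*(4*(c_b + c_R + 4*μ) + μ + 1))) = 1/2 := by
      field_simp
    linarith
  have haux1 : μ * τ ≤ (4*(c_b + c_R + 4*μ) + μ + 1) * τ :=
    mul_le_mul_of_nonneg_right (by linarith) hτ.le
  have haux2 : 4*(c_b + c_R + 4*μ) * τ ≤ (4*(c_b + c_R + 4*μ) + μ + 1) * τ :=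
    mul_le_mul_of_nonneg_right (by linarith) hτ.le
  have haux3 : 1 * τ ≤ (4*(c_b + c_R + 4*μ) + μ + 1) * τ :=
    mul_le_mul_of_nonneg_right (by linarith) hτ.le
  have hτ1 : τ ≤ 1 := by linarith
  have hμτ : μ * τ ≤ 1/2 := by linarith
  have hKτ : 4*(c_b + c_R + 4*μ) * τ ≤ 1/2 := by linarith
  -- G-norm energy
  set G : ℕ → ℝ := fun k => (1/4) * ((M k).mulVec (θ k) ⬝ᵥ θ k
      + (M k).mulVec ((2:ℝ)•θ k - θ (k-1)) ⬝ᵥ ((2:ℝ)•θ k - θ (k-1))) with hG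
  -- one-step estimate
  have hstep : ∀ m, 1 ≤ m → m < N →
      G (m+1) + (τ/2)*((S (m+1)).mulVec (θ (m+1)) ⬝ᵥ θ (m+1))
        ≤ (1 + (2*(4*(c_b + c_R + 4*μ)) + 29*μ + 58*(4*(c_b + c_R + 4*μ))*μ) * τ) * (G m)
          + 2*τ*(δ (m+1)) := by
    intro m hm hmN
    have hm1 : m - 1 + 1 = m := Nat.succ_pred_eq_of_pos hm
    have hlip2' := hlip m hmN
    have hlip1' : ∀ x y : Fin J → ℝ, |(M m - M (m-1)).mulVec x ⬝ᵥ y|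
        ≤ μ * τ * Real.sqrt ((M (m-1)).mulVec x ⬝ᵥ x)
          * Real.sqrt ((M (m-1)).mulVec y ⬝ᵥ y) := by
      have h := hlip (m-1) (by omega)
      rwa [hm1] at h
    have hscheme : (3/2) * ((M (m+1)).mulVec (θ (m+1)) ⬝ᵥ θ (m+1))
        - 2 * ((M m).mulVec (θ m) ⬝ᵥ θ (m+1))
        + (1/2) * ((M (m-1)).mulVec (θ (m-1)) ⬝ᵥ θ (m+1))
        + τ * ((S (m+1)).mulVec (θ (m+1)) ⬝ᵥ θ (m+1))
        + τ * (b (m+1) (θ (m+1)) (θ (m+1)))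
        = τ * (R (m+1) (θ (m+1))) := by
      have e := hEq m hm hmN (θ (m+1))
      field_simp at e
      linarith only [e]
    have hres := bdf2_step μ c_b c_R τ (δ (m+1)) hμ hcb hcR hτ hτ1 hμτ hKτ
      (hδ (m+1) (by omega) hmN)
      (M (m-1)) (M m) (M (m+1)) (S (m+1))
      ((hMpd (m-1) (by omega)).posSemidef) ((hMpd m (by omega)).posSemidef)
      ((hMpd (m+1) (by omega)).posSemidef) (hSpsd (m+1) (by omega))
      (θ (m+1)) (θ m) (θ (m-1)) hlip1' hlip2'
      (b (m+1) (θ (m+1)) (θ (m+1))) (R (m+1) (θ (m+1)))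
      (hbb (m+1) (by omega) (θ (m+1))) (hR m hm hmN) hscheme
    simp only [hG, Nat.add_sub_cancel]
    exact hres
  -- nonnegativity for Grönwall
  have hg1 : 0 ≤ G 1 := by
    simp only [hG]
    have h1 := psd_nonneg _ ((hMpd 1 (by omega)).posSemidef) (θ 1)
    have h2 := psd_nonneg _ ((hMpd 1 (by omega)).posSemidef) ((2:ℝ)•θ 1 - θ (1-1))
    linarith
  have hsnn : ∀ i, 2 ≤ i → i ≤ N →
      0 ≤ (fun i => (τ/2)*((S i).mulVec (θ i) ⬝ᵥ θ i)) i := by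
    intro i _ hiN
    exact mul_nonneg (by positivity) (psd_nonneg _ (hSpsd i hiN) (θ i))
  have hdnn : ∀ i, 2 ≤ i → i ≤ N → 0 ≤ (fun i => 2*τ*δ i) i := by
    intro i h2 hiN
    have := hδ i h2 hiN
    simp only
    positivity
  have hgr := bdf2_gronwall
    (2*(4*(c_b + c_R + 4*μ)) + 29*μ + 58*(4*(c_b + c_R + 4*μ))*μ) τ hAbar0 hτ.le
    G (fun i => (τ/2)*((S i).mulVec (θ i) ⬝ᵥ θ i)) (fun i => 2*τ*δ i) N
    hg1 hsnn hdnn hstep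
  -- final assembly
  intro n hn2 hnN
  have hgrn := hgr n (by omega) hnN
  -- names
  have hsum1 : ∑ i ∈ Finset.Icc 2 n, (τ/2)*((S i).mulVec (θ i) ⬝ᵥ θ i)
      = (τ/2) * ∑ i ∈ Finset.Icc 2 n, ((S i).mulVec (θ i) ⬝ᵥ θ i) := by
    rw [Finset.mul_sum]
  have hsum2 : ∑ i ∈ Finset.Icc 2 n, 2*τ*δ i = 2*τ*∑ i ∈ Finset.Icc 2 n, δ i := by
    rw [Finset.mul_sum]
  rw [hsum1, hsum2] at hgrn
  have hY0 : 0 ≤ ∑ i ∈ Finset.Icc 2 n, ((S i).mulVec (θ i) ⬝ᵥ θ i) :=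
    Finset.sum_nonneg fun i hi => psd_nonneg _
      (hSpsd i (le_trans (Finset.mem_Icc.mp hi).2 hnN)) (θ i)
  have hD0 : 0 ≤ ∑ i ∈ Finset.Icc 2 n, δ i :=
    Finset.sum_nonneg fun i hi => hδ i (Finset.mem_Icc.mp hi).1
      (le_trans (Finset.mem_Icc.mp hi).2 hnN)
  have hEn4 : (M n).mulVec (θ n) ⬝ᵥ θ n ≤ 4 * G n := by
    simp only [hG]
    have := psd_nonneg _ ((hMpd n hnN).posSemidef) ((2:ℝ)•θ n - θ (n-1))
    linarith
  -- exponent bound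
  have hpow : (1 + (2*(4*(c_b + c_R + 4*μ)) + 29*μ + 58*(4*(c_b + c_R + 4*μ))*μ) * τ)^(n-1)
      ≤ Real.exp ((2*(4*(c_b + c_R + 4*μ)) + 29*μ + 58*(4*(c_b + c_R + 4*μ))*μ) * T) := by
    set A' : ℝ := 2*(4*(c_b + c_R + 4*μ)) + 29*μ + 58*(4*(c_b + c_R + 4*μ))*μ with hA'
    have h1 : (0:ℝ) ≤ 1 + A'*τ := by positivity
    have h2 : 1 + A'*τ ≤ Real.exp (A'*τ) := by
      have := Real.add_one_le_exp (A'*τ); linarith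
    calc (1 + A'*τ)^(n-1) ≤ (Real.exp (A'*τ))^(n-1) := pow_le_pow_left₀ h1 h2 _
      _ = Real.exp ((n-1 : ℕ) * (A'*τ)) := (Real.exp_nat_mul _ _).symm
      _ ≤ Real.exp (A'*T) := by
          apply Real.exp_le_exp.mpr
          have hc : ((n-1 : ℕ) : ℝ) ≤ (N : ℝ) := Nat.cast_le.mpr (by omega)
          have h3 := mul_le_mul_of_nonneg_right hc (mul_nonneg hAbar0 hτ.le)
          have h4 : A'*T = (N:ℝ)*(A'*τ) := by rw [← hNτ]; ring
          rw [h4]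
          exact h3
  -- initial energy bound
  have hG1 : G 1 ≤ 3 * ((M 0).mulVec (θ 0) ⬝ᵥ θ 0 + (M 1).mulVec (θ 1) ⬝ᵥ θ 1) := by
    have hps1 := (hMpd 1 (by omega)).posSemidef
    have hps0 := (hMpd 0 (by omega)).posSemidef
    have hsub := psd_sub_le (M 1) hps1 ((2:ℝ)•θ 1) (θ 0)
    rw [psd_smul_two (M 1) (θ 1)] at hsub
    have hE0 := psd_nonneg _ hps0 (θ 0)
    have hE1 := psd_nonneg _ hps1 (θ 1)
    have hl := hlip 0 (by omega) (θ 0) (θ 0)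
    rw [sub_mulVec, sub_dotProduct, mul_assoc, Real.mul_self_sqrt hE0] at hl
    norm_num at hl
    have hl2 := (abs_le.mp hl).2
    have hmm : μ*τ*((M 0).mulVec (θ 0) ⬝ᵥ θ 0) ≤ (1/2)*((M 0).mulVec (θ 0) ⬝ᵥ θ 0) :=
      mul_le_mul_of_nonneg_right hμτ hE0
    simp only [hG, Nat.sub_self]
    linarith
  -- put everything together
  have hbase0 : 0 ≤ G 1 + 2*τ*∑ i ∈ Finset.Icc 2 n, δ i := by positivity
  have hPE := mul_le_mul_of_nonneg_right hpow hbase0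
  have hexp0 : (0:ℝ)
      ≤ Real.exp ((2*(4*(c_b + c_R + 4*μ)) + 29*μ + 58*(4*(c_b + c_R + 4*μ))*μ) * T) :=
    (Real.exp_pos _).le
  have hG1e := mul_le_mul_of_nonneg_left
    (by linarith : G 1 + 2*τ*∑ i ∈ Finset.Icc 2 n, δ i
      ≤ 3 * ((M 0).mulVec (θ 0) ⬝ᵥ θ 0 + (M 1).mulVec (θ 1) ⬝ᵥ θ 1)
        + 2*τ*∑ i ∈ Finset.Icc 2 n, δ i) hexp0
  have hEτD : 0 ≤ Real.exp ((2*(4*(c_b + c_R + 4*μ)) + 29*μ + 58*(4*(c_b + c_R + 4*μ))*μ) * T)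
      * (τ * ∑ i ∈ Finset.Icc 2 n, δ i) := mul_nonneg hexp0 (mul_nonneg hτ.le hD0)
  have hYτ : 0 ≤ (τ/2) * ∑ i ∈ Finset.Icc 2 n, ((S i).mulVec (θ i) ⬝ᵥ θ i) :=
    mul_nonneg (by positivity) hY0
  linarith only [hgrn, hEn4, hPE, hG1e, hEτD, hYτ]
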